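/- Let r ≥ 1 and let 𝓑 ⊆ 𝓑' be 1-bracketings of r with #𝓑' = #𝓑 + 2. Then there exist exactly two 1-bracketings 𝓑'' of r with 𝓑 ⊊ 𝓑'' ⊊ 𝓑'. -/
import Mathlib


/-- A 1-bracket of `r` (Finset version): a nonempty consecutive subset of `{1, …, r}`. -/
def IsOneBracketF (r : ℕ) (B : Finset (Fin r)) : Prop :=
  B.Nonempty ∧ ∀ i j k : Fin r, i ≤ j → j ≤ k → i ∈ B → k ∈ B → j ∈ B

/-- A 1-bracketing of `r` (Finset version). -/
def IsOneBracketingF (r : ℕ) (Bs : Finset (Finset (Fin r))) : Prop :=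
  (∀ B ∈ Bs, IsOneBracketF r B) ∧
  (∀ B ∈ Bs, ∀ B' ∈ Bs, (B ∩ B').Nonempty → B ⊆ B' ∨ B' ⊆ B) ∧
  Finset.univ ∈ Bs ∧ ∀ i : Fin r, ({i} : Finset (Fin r)) ∈ Bs

/-- A set between two bracketings is a bracketing. -/
lemma sandwich_bracketing (r : ℕ) (Bs C Bs' : Finset (Finset (Fin r)))
    (h1 : IsOneBracketingF r Bs) (h2 : IsOneBracketingF r Bs')
    (hBC : Bs ⊆ C) (hCB' : C ⊆ Bs') : IsOneBracketingF r C := by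
  obtain ⟨-, -, huniv, hsing⟩ := h1
  obtain ⟨hb, hn, -, -⟩ := h2
  exact ⟨fun B hB => hb B (hCB' hB),
    fun B hB B' hB' h => hn B (hCB' hB) B' (hCB' hB') h,
    hBC huniv, fun i => hBC (hsing i)⟩

/-- Let `r ≥ 1` and let `𝓑 ⊆ 𝓑'` be 1-bracketings of `r` with
`#𝓑' = #𝓑 + 2`.  Then there exist exactly two 1-bracketings `𝓑''` of `r` with
`𝓑 ⊊ 𝓑'' ⊊ 𝓑'`. -/
theorem stmt8 (r : ℕ) (hr : 1 ≤ r) (Bs Bs' : Finset (Finset (Fin r)))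
    (h1 : IsOneBracketingF r Bs) (h2 : IsOneBracketingF r Bs')
    (hsub : Bs ⊆ Bs') (hcard : Bs'.card = Bs.card + 2) :
    ({C : Finset (Finset (Fin r)) |
        IsOneBracketingF r C ∧ Bs ⊂ C ∧ C ⊂ Bs'}).ncard = 2 := by
  classical
  have hSd : (Bs' \ Bs).card = 2 := by
    rw [Finset.card_sdiff_of_subset hsub, hcard]; omega
  obtain ⟨X, Y, hXY, hS⟩ := Finset.card_eq_two.mp hSd
  have hX : X ∈ Bs' \ Bs := by rw [hS]; simp
  have hY : Y ∈ Bs' \ Bs := by rw [hS]; simp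
  have hXBs' : X ∈ Bs' := (Finset.mem_sdiff.mp hX).1
  have hYBs' : Y ∈ Bs' := (Finset.mem_sdiff.mp hY).1
  have hXBs : X ∉ Bs := (Finset.mem_sdiff.mp hX).2
  have hYBs : Y ∉ Bs := (Finset.mem_sdiff.mp hY).2
  have key : {C : Finset (Finset (Fin r)) |
      IsOneBracketingF r C ∧ Bs ⊂ C ∧ C ⊂ Bs'} = {insert X Bs, insert Y Bs} := by
    ext C
    simp only [Set.mem_setOf_eq, Set.mem_insert_iff, Set.mem_singleton_iff]
    constructor
    · rintro ⟨hbr, hBC, hCB'⟩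
      have hCsub : C ⊆ Bs' := hCB'.1
      have hBsub : Bs ⊆ C := hBC.1
      -- every element of C is in Bs or equals X or Y
      have hmem : ∀ c ∈ C, c ∈ Bs ∨ c = X ∨ c = Y := by
        intro c hc
        by_cases h : c ∈ Bs
        · exact Or.inl h
        · have : c ∈ Bs' \ Bs := Finset.mem_sdiff.mpr ⟨hCsub hc, h⟩
          rw [hS] at this
          simpa using Or.inr (by simpa using this)
      by_cases hXC : X ∈ C <;> by_cases hYC : Y ∈ C
      · exfalso
        apply hCB'.2
        intro c hc
        by_cases h : c ∈ Bs
        · exact hBsub h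
        · have : c ∈ Bs' \ Bs := Finset.mem_sdiff.mpr ⟨hc, h⟩
          rw [hS] at this
          rcases Finset.mem_insert.mp this with h' | h'
          · exact h' ▸ hXC
          · exact (Finset.mem_singleton.mp h') ▸ hYC
      · left
        apply Finset.Subset.antisymm
        · intro c hc
          rcases hmem c hc with h | h | h
          · exact Finset.mem_insert_of_mem h
          · rw [h]; exact Finset.mem_insert_self _ _
          · exact absurd (h ▸ hc) hYC
        · exact Finset.insert_subset hXC hBsub
      · right
        apply Finset.Subset.antisymm
        · intro c hc
          rcases hmem c hc with h | h | h
          · exact Finset.mem_insert_of_mem h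
          · exact absurd (h ▸ hc) hXC
          · rw [h]; exact Finset.mem_insert_self _ _
        · exact Finset.insert_subset hYC hBsub
      · exfalso
        obtain ⟨c, hcC, hcB⟩ := Finset.exists_of_ssubset hBC
        rcases hmem c hcC with h | h | h
        · exact hcB h
        · exact hXC (h ▸ hcC)
        · exact hYC (h ▸ hcC)
    · rintro (rfl | rfl)
      · refine ⟨sandwich_bracketing r Bs _ Bs' h1 h2 (Finset.subset_insert _ _)
          (Finset.insert_subset hXBs' hsub), ?_, ?_⟩
        · exact Finset.ssubset_insert hXBs
        · refine Finset.ssubset_iff_of_subset (Finset.insert_subset hXBs' hsub) |>.mpr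
            ⟨Y, hYBs', ?_⟩
          simp [Finset.mem_insert, hXY.symm, hYBs]
      · refine ⟨sandwich_bracketing r Bs _ Bs' h1 h2 (Finset.subset_insert _ _)
          (Finset.insert_subset hYBs' hsub), ?_, ?_⟩
        · exact Finset.ssubset_insert hYBs
        · refine Finset.ssubset_iff_of_subset (Finset.insert_subset hYBs' hsub) |>.mpr
            ⟨X, hXBs', ?_⟩
          simp [Finset.mem_insert, hXY, hXBs]
  rw [key]
  rw [Set.ncard_pair]
  intro h
  have : X ∈ insert Y Bs := h ▸ Finset.mem_insert_self X Bs
  rcases Finset.mem_insert.mp this with h' | h'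
  · exact hXY h'
  · exact hXBs h'
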